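/- Let T, a, b, c₀, d₀, K > 0. Then there exist constants M_s, M_c > 0, independent of ε, such that for every ε ∈ (0,1] and all continuously differentiable nonnegative functions E, F : [0, T/ε] → ℝ with E(0) = F(0) = 0 satisfying the differential inequalities E′(t) ≤ -a E(t) + b F(t) + c₀ ε and F′(t) ≤ d₀ ε (E(t) + F(t)) + K ε for all t ∈ [0, T/ε], one has sup_{t ∈ [0,T/ε]} E(t) ≤ M_s and sup_{t ∈ [0,T/ε]} F(t) ≤ M_c. -/

import Mathlib

open Set Filter Real
open scoped Topology

/-- Grönwall-type comparison for the coupled energy inequalities: given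
`T, a, b, c₀, d₀, K > 0` there are `M_s, M_c > 0`, independent of `ε`, such that for every
`ε ∈ (0,1]` and all continuously differentiable nonnegative `E, F : [0,T/ε] → ℝ` with
`E(0) = F(0) = 0`, `E′ ≤ -aE + bF + c₀ε` and `F′ ≤ d₀ε(E + F) + Kε` on `[0,T/ε]`, one has
`E ≤ M_s` and `F ≤ M_c` on `[0,T/ε]`. -/
theorem coupled_energy_gronwall (T a b c₀ d₀ K : ℝ)
    (hT : 0 < T) (ha : 0 < a) (hb : 0 < b) (hc₀ : 0 < c₀) (hd₀ : 0 < d₀) (hK : 0 < K) :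
    ∃ Ms Mc : ℝ, 0 < Ms ∧ 0 < Mc ∧
      ∀ ε : ℝ, ε ∈ Set.Ioc (0:ℝ) 1 →
        ∀ E F E' F' : ℝ → ℝ,
          (∀ t ∈ Set.Icc (0:ℝ) (T / ε), HasDerivWithinAt E (E' t) (Set.Icc 0 (T / ε)) t) →
          (∀ t ∈ Set.Icc (0:ℝ) (T / ε), HasDerivWithinAt F (F' t) (Set.Icc 0 (T / ε)) t) →
          ContinuousOn E' (Set.Icc 0 (T / ε)) →
          ContinuousOn F' (Set.Icc 0 (T / ε)) →
          (∀ t ∈ Set.Icc (0:ℝ) (T / ε), 0 ≤ E t) →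
          (∀ t ∈ Set.Icc (0:ℝ) (T / ε), 0 ≤ F t) →
          E 0 = 0 → F 0 = 0 →
          (∀ t ∈ Set.Icc (0:ℝ) (T / ε), E' t ≤ -(a * E t) + b * F t + c₀ * ε) →
          (∀ t ∈ Set.Icc (0:ℝ) (T / ε), F' t ≤ d₀ * ε * (E t + F t) + K * ε) →
          (∀ t ∈ Set.Icc (0:ℝ) (T / ε), E t ≤ Ms) ∧
          (∀ t ∈ Set.Icc (0:ℝ) (T / ε), F t ≤ Mc) := by
  obtain ⟨θ, hθdef⟩ : ∃ θ : ℝ, θ = a / (2 * b) := ⟨_, rfl⟩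
  have hθ : 0 < θ := by rw [hθdef]; positivity
  obtain ⟨C, hCdef⟩ : ∃ C : ℝ, C = d₀ * (1 + 1 / θ) := ⟨_, rfl⟩
  obtain ⟨C', hC'def⟩ : ∃ C' : ℝ, C' = θ * c₀ + K := ⟨_, rfl⟩
  have hC : 0 < C := by rw [hCdef]; positivity
  have hC' : 0 < C' := by rw [hC'def]; positivity
  obtain ⟨Mc, hMcdef⟩ : ∃ Mc : ℝ, Mc = C' / C * (Real.exp (C * T) - 1) := ⟨_, rfl⟩
  have hexpT : (1 : ℝ) < Real.exp (C * T) := by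
    rw [← Real.exp_zero]
    exact Real.exp_lt_exp.mpr (by positivity)
  have hMcpos : 0 < Mc := by
    rw [hMcdef]
    have : 0 < Real.exp (C * T) - 1 := by linarith
    positivity
  refine ⟨Mc / θ, Mc, by positivity, hMcpos, ?_⟩
  rintro ε ⟨hε0, hε1⟩ E F E' F' hE hF _ _ hEpos hFpos hE0 hF0 hEineq hFineq
  obtain ⟨b', hb'def⟩ : ∃ b' : ℝ, b' = T / ε := ⟨_, rfl⟩
  rw [← hb'def] at hE hF hEpos hFpos hEineq hFineq
  have hb'pos : 0 < b' := by rw [hb'def]; exact div_pos hT hε0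
  obtain ⟨Ψ, hΨdef⟩ : ∃ Ψ : ℝ → ℝ, Ψ = fun t => max (θ * E t) (F t) := ⟨_, rfl⟩
  obtain ⟨Ψ', hΨ'def⟩ : ∃ Ψ' : ℝ → ℝ,
      Ψ' = fun t => if F t ≤ θ * E t then max (θ * E' t) (F' t) else F' t := ⟨_, rfl⟩
  have hΨx : ∀ t, Ψ t = max (θ * E t) (F t) := fun t => by rw [hΨdef]
  have hEc : ContinuousOn E (Icc 0 b') := fun t ht => (hE t ht).continuousWithinAt
  have hFc : ContinuousOn F (Icc 0 b') := fun t ht => (hF t ht).continuousWithinAt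
  have hΨc : ContinuousOn Ψ (Icc 0 b') := by
    rw [hΨdef]
    exact fun t ht => ((hEc t ht).const_mul θ).max (hFc t ht)
  -- slope condition
  have hslope : ∀ x ∈ Ico 0 b', ∀ r, Ψ' x < r →
      ∃ᶠ z in 𝓝[>] x, (z - x)⁻¹ * (Ψ z - Ψ x) < r := by
    intro x hx r hr
    have hxIcc : x ∈ Icc 0 b' := Ico_subset_Icc_self hx
    have hmem : Icc 0 b' ∈ 𝓝[>] x := Icc_mem_nhdsGT_of_mem hx
    have hmemd : Icc 0 b' \ {x} ∈ 𝓝[>] x := by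
      rw [diff_eq]
      exact inter_mem hmem (mem_of_superset self_mem_nhdsWithin
        (fun z hz => by simp [ne_of_gt (show x < z from hz)]))
    have hle : 𝓝[>] x ≤ 𝓝[Icc 0 b'] x := nhdsWithin_le_of_mem hmem
    have hled : 𝓝[>] x ≤ 𝓝[Icc 0 b' \ {x}] x := nhdsWithin_le_of_mem hmemd
    have hEslope : Tendsto (slope E x) (𝓝[>] x) (𝓝 (E' x)) :=
      ((hasDerivWithinAt_iff_tendsto_slope.1 (hE x hxIcc))).mono_left hled
    have hFslope : Tendsto (slope F x) (𝓝[>] x) (𝓝 (F' x)) :=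
      ((hasDerivWithinAt_iff_tendsto_slope.1 (hF x hxIcc))).mono_left hled
    have hIoi : ∀ᶠ z in 𝓝[>] x, x < z := self_mem_nhdsWithin
    by_cases hcase : F x ≤ θ * E x
    · have hΨ'eq : Ψ' x = max (θ * E' x) (F' x) := by rw [hΨ'def]; simp [hcase]
      rw [hΨ'eq] at hr
      have hr1 : θ * E' x < r := lt_of_le_of_lt (le_max_left _ _) hr
      have hr2 : F' x < r := lt_of_le_of_lt (le_max_right _ _) hr
      have h1 : ∀ᶠ z in 𝓝[>] x, θ * slope E x z < r :=
        (hEslope.const_mul θ).eventually (eventually_lt_nhds hr1)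
      have h2 : ∀ᶠ z in 𝓝[>] x, slope F x z < r :=
        hFslope.eventually (eventually_lt_nhds hr2)
      refine ((h1.and (h2.and hIoi)).mono ?_).frequently
      rintro z ⟨h1, h2, h3⟩
      have hzx : 0 < z - x := sub_pos.2 h3
      have key : Ψ z - Ψ x ≤ max (θ * E z - θ * E x) (F z - F x) := by
        have hA : θ * E x ≤ Ψ x := by rw [hΨx]; exact le_max_left _ _
        have hB : F x ≤ Ψ x := by rw [hΨx]; exact le_max_right _ _
        rcases le_total (θ * E z) (F z) with h | h
        · have hz : Ψ z = F z := by rw [hΨx]; exact max_eq_right h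
          have : Ψ z - Ψ x ≤ F z - F x := by rw [hz]; linarith
          exact this.trans (le_max_right _ _)
        · have hz : Ψ z = θ * E z := by rw [hΨx]; exact max_eq_left h
          have : Ψ z - Ψ x ≤ θ * E z - θ * E x := by rw [hz]; linarith
          exact this.trans (le_max_left _ _)
      calc (z - x)⁻¹ * (Ψ z - Ψ x)
          ≤ (z - x)⁻¹ * max (θ * E z - θ * E x) (F z - F x) :=
            mul_le_mul_of_nonneg_left key (inv_nonneg.2 hzx.le)
        _ = max ((z - x)⁻¹ * (θ * E z - θ * E x)) ((z - x)⁻¹ * (F z - F x)) :=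
            mul_max_of_nonneg _ _ (inv_nonneg.2 hzx.le)
        _ = max (θ * slope E x z) (slope F x z) := by
            rw [slope_def_field, slope_def_field, div_eq_inv_mul, div_eq_inv_mul]
            ring_nf
        _ < r := max_lt h1 h2
    · push_neg at hcase
      have hΨ'eq : Ψ' x = F' x := by rw [hΨ'def]; simp [not_le.2 hcase]
      rw [hΨ'eq] at hr
      have h2 : ∀ᶠ z in 𝓝[>] x, slope F x z < r :=
        hFslope.eventually (eventually_lt_nhds hr)
      have hpos : ∀ᶠ z in 𝓝[>] x, θ * E z < F z := by
        have hc : ContinuousWithinAt (fun z => F z - θ * E z) (Icc 0 b') x :=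
          (hFc x hxIcc).sub ((hEc x hxIcc).const_mul θ)
        have h0 : (0 : ℝ) < F x - θ * E x := by linarith
        have := (hc.mono_left hle).eventually (eventually_gt_nhds h0)
        exact this.mono fun z hz => by linarith
      refine ((h2.and (hpos.and hIoi)).mono ?_).frequently
      rintro z ⟨h2, h4, h3⟩
      have hΨz : Ψ z = F z := by rw [hΨx]; exact max_eq_right h4.le
      have hΨxx : Ψ x = F x := by rw [hΨx]; exact max_eq_right hcase.le
      rw [hΨz, hΨxx]
      rw [slope_def_field, div_eq_inv_mul] at h2
      exact h2
  -- bound condition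
  have bound : ∀ x ∈ Ico 0 b', Ψ' x ≤ (C * ε) * Ψ x + C' * ε := by
    intro x hx
    have hxIcc : x ∈ Icc 0 b' := Ico_subset_Icc_self hx
    have h1 := hEineq x hxIcc
    have h2 := hFineq x hxIcc
    have hE0' := hEpos x hxIcc
    have hF0' := hFpos x hxIcc
    have hA : θ * E x ≤ Ψ x := by rw [hΨx]; exact le_max_left _ _
    have hB : F x ≤ Ψ x := by rw [hΨx]; exact le_max_right _ _
    have hΨ0 : 0 ≤ Ψ x := le_trans hF0' hB
    have hbθ : b * θ = a / 2 := by rw [hθdef]; field_simp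
    have hF'bd : F' x ≤ C * ε * Ψ x + C' * ε := by
      have hCexp : C * ε * Ψ x = d₀ * ε * Ψ x + d₀ * ε * (Ψ x / θ) := by
        rw [hCdef]; field_simp
      have hEx : E x ≤ Ψ x / θ := by
        rw [le_div_iff₀ hθ]; linarith
      have hstep : d₀ * ε * (E x + F x) ≤ d₀ * ε * (Ψ x / θ + Ψ x) := by
        have := add_le_add hEx hB
        exact mul_le_mul_of_nonneg_left this (by positivity)
      have hKC' : K * ε ≤ C' * ε := by
        have : K ≤ C' := by rw [hC'def]; nlinarith [mul_nonneg hθ.le hc₀.le]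
        exact mul_le_mul_of_nonneg_right this hε0.le
      calc F' x ≤ d₀ * ε * (E x + F x) + K * ε := h2
        _ ≤ d₀ * ε * (Ψ x / θ + Ψ x) + C' * ε := add_le_add hstep hKC'
        _ = C * ε * Ψ x + C' * ε := by rw [hCexp]; ring
    by_cases hcase : F x ≤ θ * E x
    · have hΨ'eq : Ψ' x = max (θ * E' x) (F' x) := by rw [hΨ'def]; simp [hcase]
      rw [hΨ'eq]
      refine max_le ?_ hF'bd
      have hbF : b * F x ≤ (a / 2) * E x := by
        have h := mul_le_mul_of_nonneg_left hcase hb.le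
        calc b * F x ≤ b * (θ * E x) := h
          _ = (a / 2) * E x := by rw [← mul_assoc, hbθ]
      have hE'bd : E' x ≤ c₀ * ε := by
        linarith [mul_nonneg ha.le hE0']
      have hθE' : θ * E' x ≤ θ * c₀ * ε := by
        have := mul_le_mul_of_nonneg_left hE'bd hθ.le
        linarith
      have hθc : θ * c₀ * ε ≤ C' * ε := by
        have h5 : θ * c₀ ≤ C' := by rw [hC'def]; linarith [hK.le]
        exact mul_le_mul_of_nonneg_right h5 hε0.le
      linarith [mul_nonneg (mul_nonneg hC.le hε0.le) hΨ0]
    · have hΨ'eq : Ψ' x = F' x := by rw [hΨ'def]; simp [hcase]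
      rw [hΨ'eq]; exact hF'bd
  have hΨ0eq : Ψ 0 ≤ 0 := by rw [hΨx 0, hE0, hF0]; simp
  have main := le_gronwallBound_of_liminf_deriv_right_le hΨc hslope hΨ0eq bound
  have hΨbd : ∀ x ∈ Icc 0 b', Ψ x ≤ Mc := by
    intro x hx
    have h := main x hx
    rw [sub_zero] at h
    have hKne : C * ε ≠ 0 := by positivity
    rw [gronwallBound_of_K_ne_0 hKne] at h
    have hεx : ε * x ≤ T := by
      have hx2 : x ≤ T / ε := hb'def ▸ hx.2
      calc ε * x = x * ε := mul_comm _ _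
        _ ≤ T := (le_div_iff₀ hε0).1 hx2
    have hexp : Real.exp (C * ε * x) ≤ Real.exp (C * T) := by
      apply Real.exp_le_exp.2
      calc C * ε * x = C * (ε * x) := by ring
        _ ≤ C * T := mul_le_mul_of_nonneg_left hεx hC.le
    have hdiv : C' * ε / (C * ε) = C' / C := by
      rw [mul_div_mul_right _ _ hε0.ne']
    calc Ψ x ≤ 0 * Real.exp (C * ε * x) + C' * ε / (C * ε) * (Real.exp (C * ε * x) - 1) := h
      _ = C' / C * (Real.exp (C * ε * x) - 1) := by rw [hdiv]; ring
      _ ≤ C' / C * (Real.exp (C * T) - 1) := by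
          apply mul_le_mul_of_nonneg_left _ (by positivity)
          linarith
      _ = Mc := hMcdef.symm
  constructor
  · intro t ht
    have ht' : t ∈ Icc 0 b' := by rw [hb'def]; exact ht
    have h := hΨbd t ht'
    have hA : θ * E t ≤ Ψ t := by rw [hΨx]; exact le_max_left _ _
    rw [le_div_iff₀ hθ]
    calc E t * θ = θ * E t := mul_comm _ _
      _ ≤ Mc := le_trans hA h
  · intro t ht
    have ht' : t ∈ Icc 0 b' := by rw [hb'def]; exact ht
    have hB : F t ≤ Ψ t := by rw [hΨx]; exact le_max_right _ _
    exact le_trans hB (hΨbd t ht')
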